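/- Let d ≥ 3 and let G be a d-regular graph on exactly 2d+1 vertices. Then every edge of G is contained in a triangle of G or in an induced 4-cycle of G. -/
import Mathlib


open SimpleGraph

/-- A Δ⁺-switch: five distinct vertices `v w x y z` with `vx, vw, xy, wz` edges
and `xw, yz` non-edges; the edges `xy, wz` are deleted and `xw, yz` are added. -/
def DeltaPlusSwitch {V : Type*} (G G' : SimpleGraph V) : Prop :=
  ∃ v w x y z : V, List.Pairwise (· ≠ ·) [v, w, x, y, z] ∧
    G.Adj v x ∧ G.Adj v w ∧ G.Adj x y ∧ G.Adj w z ∧ ¬ G.Adj x w ∧ ¬ G.Adj y z ∧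
    G'.edgeSet = (G.edgeSet \ {s(x, y), s(w, z)}) ∪ {s(x, w), s(y, z)}

/-- A Δ⁻-switch: five distinct vertices `v w x y z` with `vx, vw, xw, yz` edges
and `xy, wz` non-edges; the edges `xw, yz` are deleted and `xy, wz` are added. -/
def DeltaMinusSwitch {V : Type*} (G G' : SimpleGraph V) : Prop :=
  ∃ v w x y z : V, List.Pairwise (· ≠ ·) [v, w, x, y, z] ∧
    G.Adj v x ∧ G.Adj v w ∧ G.Adj x w ∧ G.Adj y z ∧ ¬ G.Adj x y ∧ ¬ G.Adj w z ∧
    G'.edgeSet = (G.edgeSet \ {s(x, w), s(y, z)}) ∪ {s(x, y), s(w, z)}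

/-- A Δ-switch is a Δ⁺-switch or a Δ⁻-switch. -/
def DeltaSwitch {V : Type*} (G G' : SimpleGraph V) : Prop :=
  DeltaPlusSwitch G G' ∨ DeltaMinusSwitch G G'

/-- Two graphs are Δ-switch equivalent if one is obtained from the other by a
finite (possibly empty) sequence of Δ-switches. -/
def DeltaEquiv {V : Type*} (G G' : SimpleGraph V) : Prop :=
  Relation.ReflTransGen DeltaSwitch G G'

/-- A graph is `d`-regular: every vertex has exactly `d` neighbours. -/
def RegularDeg {V : Type*} (G : SimpleGraph V) (d : ℕ) : Prop :=
  ∀ x : V, (G.neighborSet x).ncard = d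

/-- `a b c e` form an induced 4-cycle of `G`, containing the edge `ab`. -/
def IsInducedC4 {V : Type*} (G : SimpleGraph V) (a b c e : V) : Prop :=
  List.Pairwise (· ≠ ·) [a, b, c, e] ∧
    G.Adj a b ∧ G.Adj b c ∧ G.Adj c e ∧ G.Adj e a ∧ ¬ G.Adj a c ∧ ¬ G.Adj b e

/-- If `d ≥ 3` and `G` is `d`-regular on exactly `2d+1` vertices, then every edge
of `G` lies in a triangle or in an induced 4-cycle. -/
theorem edge_in_triangle_or_inducedC4_card_two_d_add_one {V : Type*} [Fintype V]
    {d : ℕ} (hd : 3 ≤ d) (G : SimpleGraph V) (hcard : Fintype.card V = 2 * d + 1)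
    (hreg : RegularDeg G d) :
    ∀ a b : V, G.Adj a b →
      (∃ c : V, G.Adj a c ∧ G.Adj b c) ∨ (∃ c e : V, IsInducedC4 G a b c e) := by
  classical
  intro a b hab
  by_cases htri : ∃ c, G.Adj a c ∧ G.Adj b c
  · exact Or.inl htri
  right
  by_contra hc4
  push_neg at htri hc4
  set A := G.neighborSet a \ {b} with hA
  set B := G.neighborSet b \ {a} with hB
  have hbA : b ∈ G.neighborSet a := hab
  have haB : a ∈ G.neighborSet b := hab.symm
  have hAcard : A.ncard = d - 1 := by
    rw [hA, Set.ncard_diff_singleton_of_mem hbA, hreg a]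
  have hBcard : B.ncard = d - 1 := by
    rw [hB, Set.ncard_diff_singleton_of_mem haB, hreg b]
  have hABdisj : Disjoint A B := by
    rw [Set.disjoint_left]
    intro x hx hx'
    exact htri x hx.1 hx'.1
  have hnoedge : ∀ e ∈ A, ∀ c ∈ B, ¬ G.Adj e c := by
    intro e he c hcm hec
    have hae : G.Adj a e := he.1
    have hbc : G.Adj b c := hcm.1
    have hnac : ¬ G.Adj a c := fun h => htri c h hbc
    have hnbe : ¬ G.Adj b e := fun h => htri e hae h
    have h1 : a ≠ b := hab.ne
    have h2 : a ≠ c := Ne.symm hcm.2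
    have h3 : a ≠ e := hae.ne
    have h4 : b ≠ c := hbc.ne
    have h5 : b ≠ e := Ne.symm he.2
    have h6 : c ≠ e := hec.symm.ne
    refine hc4 c e ⟨?_, hab, hbc, hec.symm, hae.symm, hnac, hnbe⟩
    simp only [List.pairwise_cons, List.mem_cons, List.not_mem_nil]
    aesop
  have huniv : (Set.univ : Set V).ncard = 2 * d + 1 := by
    rw [Set.ncard_univ, Nat.card_eq_fintype_card, hcard]
  have hbB : b ∉ B := fun h => G.irrefl h.1
  have haA : a ∉ A := fun h => G.irrefl h.1
  have hAx : ∀ x ∈ A, G.neighborSet x = Set.univ \ (insert b (insert x B)) := by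
    intro x hx
    have hax : G.Adj a x := hx.1
    have hxB : x ∉ B := Set.disjoint_left.mp hABdisj hx
    have hxb : x ≠ b := hx.2
    have hnxb : ¬ G.Adj x b := fun h => htri x hax h.symm
    have hTcard : (insert b (insert x B) : Set V).ncard = d + 1 := by
      rw [Set.ncard_insert_of_notMem (by simp [hxB, hbB, Ne.symm hxb]),
        Set.ncard_insert_of_notMem hxB, hBcard]
      omega
    have hsub : G.neighborSet x ⊆ Set.univ \ (insert b (insert x B)) := by
      intro y hy
      have hxy : G.Adj x y := hy
      refine ⟨trivial, ?_⟩
      simp only [Set.mem_insert_iff]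
      push_neg
      exact ⟨fun h => hnxb (h ▸ hxy), fun h => G.irrefl (h ▸ hxy),
        fun hyB => hnoedge x hx y hyB hxy⟩
    have hdc : (Set.univ \ (insert b (insert x B)) : Set V).ncard = d := by
      rw [Set.ncard_diff (Set.subset_univ _), huniv, hTcard]
      omega
    exact (Set.eq_of_subset_of_ncard_le hsub
      (by rw [hdc, hreg x]) (Set.toFinite _))
  have hBy : ∀ y ∈ B, G.neighborSet y = Set.univ \ (insert a (insert y A)) := by
    intro y hy
    have hby : G.Adj b y := hy.1
    have hyA : y ∉ A := fun h => Set.disjoint_left.mp hABdisj h hy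
    have hya : y ≠ a := hy.2
    have hnya : ¬ G.Adj y a := fun h => htri y h.symm hby
    have hTcard : (insert a (insert y A) : Set V).ncard = d + 1 := by
      rw [Set.ncard_insert_of_notMem (by simp [hyA, haA, Ne.symm hya]),
        Set.ncard_insert_of_notMem hyA, hAcard]
      omega
    have hsub : G.neighborSet y ⊆ Set.univ \ (insert a (insert y A)) := by
      intro z hz
      have hyz : G.Adj y z := hz
      refine ⟨trivial, ?_⟩
      simp only [Set.mem_insert_iff]
      push_neg
      exact ⟨fun h => hnya (h ▸ hyz), fun h => G.irrefl (h ▸ hyz),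
        fun hzA => hnoedge z hzA y hy hyz.symm⟩
    have hdc : (Set.univ \ (insert a (insert y A)) : Set V).ncard = d := by
      rw [Set.ncard_diff (Set.subset_univ _), huniv, hTcard]
      omega
    exact (Set.eq_of_subset_of_ncard_le hsub
      (by rw [hdc, hreg y]) (Set.toFinite _))
  have hbig : ∃ u, u ∉ (insert a (insert b (A ∪ B)) : Set V) := by
    by_contra h
    push_neg at h
    have heq : (insert a (insert b (A ∪ B)) : Set V) = Set.univ :=
      Set.eq_univ_of_forall h
    have h3 := Set.ncard_insert_le a (insert b (A ∪ B))
    have h4 := Set.ncard_insert_le b (A ∪ B)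
    have h5 := Set.ncard_union_le A B
    rw [heq, huniv] at h3
    omega
  obtain ⟨u, hu⟩ := hbig
  simp only [Set.mem_insert_iff, Set.mem_union] at hu
  push_neg at hu
  obtain ⟨hua, hub, huA, huB⟩ := hu
  have hsub : A ∪ B ⊆ G.neighborSet u := by
    rintro x (hx | hx)
    · have h := hAx x hx
      have hux : x ≠ u := fun h' => huA (h' ▸ hx)
      have hmem : u ∈ G.neighborSet x := by
        rw [h]
        refine ⟨trivial, ?_⟩
        simp only [Set.mem_insert_iff]
        push_neg
        exact ⟨hub, Ne.symm hux, huB⟩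
      have hadj : G.Adj x u := hmem
      exact hadj.symm
    · have h := hBy x hx
      have hux : x ≠ u := fun h' => huB (h' ▸ hx)
      have hmem : u ∈ G.neighborSet x := by
        rw [h]
        refine ⟨trivial, ?_⟩
        simp only [Set.mem_insert_iff]
        push_neg
        exact ⟨hua, Ne.symm hux, huA⟩
      have hadj : G.Adj x u := hmem
      exact hadj.symm
  have hle : (A ∪ B).ncard ≤ d := by
    rw [← hreg u]
    exact Set.ncard_le_ncard hsub (Set.toFinite _)
  have heq2 : (A ∪ B).ncard = (d - 1) + (d - 1) := by
    rw [Set.ncard_union_eq hABdisj, hAcard, hBcard]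
  omega
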